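/- In the one-dimensional split framework, suppose p and g are continuously differentiable on [a,b]. Fix α ∈ [0,1), define the penalized impurity decrease Δ_α(s) = (4·P(s)·(1 − P(s)))^α · Δ(s), and let s*_α ∈ [a,b] be a maximizer of Δ_α over [a,b] with Δ_α(s*_α) > 0. Then g′(s*_α) ≠ 0 and 4·P(s*_α)·(1 − P(s*_α)) ≥ ( 4^{1−α}·(1 − α)²·p(s*_α)²·Δ_α(s*_α) / g′(s*_α)² )^{1/(3+α)}, and both P(s*_α) and 1 − P(s*_α) lie in the closed interval [(1 − √(1 − r))/2, (1 + √(1 − r))/2], where r denotes ( 4^{1−α}·(1 − α)²·p(s*_α)²·Δ_α(s*_α) / g′(s*_α)² )^{1/(3+α)}. -/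

import Mathlib

open MeasureTheory Set Real

noncomputable section

set_option maxHeartbeats 1600000 in
/-- For `p`, `g` continuously differentiable on `[a,b]`, `α ∈ [0,1)`,
and a maximizer `s*_α` of the penalized impurity decrease
`Δ_α(s) = (4P(s)(1−P(s)))^α Δ(s)` with `Δ_α(s*_α) > 0`: `g′(s*_α) ≠ 0`,
`4P(s*_α)(1−P(s*_α)) ≥ (4^{1−α}(1−α)² p(s*_α)² Δ_α(s*_α)/g′(s*_α)²)^{1/(3+α)}`, and both
`P(s*_α)` and `1 − P(s*_α)` lie in the corresponding closed interval. -/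
theorem penalized_best_split_second_order_bounds
    (a b : ℝ) (hab : a < b)
    (p g : ℝ → ℝ)
    (hp_cont : ContinuousOn p (Set.Icc a b))
    (hp_pos : ∀ u ∈ Set.Icc a b, 0 < p u)
    (hp_one : (∫ u in a..b, p u) = 1)
    (hg_cont : ContinuousOn g (Set.Icc a b))
    (p' g' : ℝ → ℝ)
    (hp' : ∀ s ∈ Set.Icc a b, HasDerivWithinAt p (p' s) (Set.Icc a b) s)
    (hp'_cont : ContinuousOn p' (Set.Icc a b))
    (hg' : ∀ s ∈ Set.Icc a b, HasDerivWithinAt g (g' s) (Set.Icc a b) s)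
    (hg'_cont : ContinuousOn g' (Set.Icc a b))
    (P M Xi G Δ : ℝ → ℝ)
    (hP : ∀ s, P s = ∫ u in a..s, p u)
    (hM : ∀ s, M s = ∫ u in a..s, g u * p u)
    (hXi : ∀ s, Xi s = M s - M b * P s)
    (hG : ∀ s, G s = g s - M b)
    (hΔ : ∀ s, Δ s = Xi s ^ 2 / (P s * (1 - P s)))
    (α : ℝ) (hα0 : 0 ≤ α) (hα1 : α < 1)
    (Δα : ℝ → ℝ)
    (hΔα : ∀ s, Δα s = (4 * P s * (1 - P s)) ^ α * Δ s)
    (sα : ℝ) (hmem : sα ∈ Set.Icc a b)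
    (hmax : ∀ s ∈ Set.Icc a b, Δα s ≤ Δα sα)
    (hpos : 0 < Δα sα)
    (r : ℝ)
    (hr : r = ((4 : ℝ) ^ (1 - α) * (1 - α) ^ 2 * p sα ^ 2 * Δα sα / g' sα ^ 2)
        ^ (1 / (3 + α))) :
    g' sα ≠ 0 ∧
    r ≤ 4 * P sα * (1 - P sα) ∧
    P sα ∈ Set.Icc ((1 - Real.sqrt (1 - r)) / 2) ((1 + Real.sqrt (1 - r)) / 2) ∧
    (1 - P sα) ∈ Set.Icc ((1 - Real.sqrt (1 - r)) / 2) ((1 + Real.sqrt (1 - r)) / 2) := by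
  obtain ⟨ha_le, hb_le⟩ := hmem
  have hmem' : sα ∈ Set.Icc a b := ⟨ha_le, hb_le⟩
  have hsubI : Set.Ioo a b ⊆ Set.Icc a b := Set.Ioo_subset_Icc_self
  have hPa : P a = 0 := by rw [hP]; simp
  have hPb : P b = 1 := by rw [hP]; exact hp_one
  -- integrability of p and g*p on subintervals
  have hgp_cont : ContinuousOn (fun u => g u * p u) (Set.Icc a b) := hg_cont.mul hp_cont
  have hsubu : ∀ s ∈ Set.Icc a b, Set.uIcc a s ⊆ Set.Icc a b := by
    intro s hs
    rw [Set.uIcc_of_le hs.1]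
    exact Set.Icc_subset_Icc le_rfl hs.2
  -- FTC: derivatives of P and M at interior points
  have hPD : ∀ s ∈ Set.Ioo a b, HasDerivAt P (p s) s := by
    intro s hs
    have h0 : HasDerivAt (fun t => ∫ u in a..t, p u) (p s) s :=
      intervalIntegral.integral_hasDerivAt_right
        ((hp_cont.mono (hsubu s (hsubI hs))).intervalIntegrable)
        ((hp_cont.mono hsubI).stronglyMeasurableAtFilter isOpen_Ioo s hs)
        ((hp_cont.mono hsubI).continuousAt (isOpen_Ioo.mem_nhds hs))
    exact h0.congr_of_eventuallyEq (Filter.Eventually.of_forall fun t => hP t)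
  have hMD : ∀ s ∈ Set.Ioo a b, HasDerivAt M (g s * p s) s := by
    intro s hs
    have h0 : HasDerivAt (fun t => ∫ u in a..t, g u * p u) (g s * p s) s :=
      intervalIntegral.integral_hasDerivAt_right
        ((hgp_cont.mono (hsubu s (hsubI hs))).intervalIntegrable)
        ((hgp_cont.mono hsubI).stronglyMeasurableAtFilter isOpen_Ioo s hs)
        ((hgp_cont.mono hsubI).continuousAt (isOpen_Ioo.mem_nhds hs))
    exact h0.congr_of_eventuallyEq (Filter.Eventually.of_forall fun t => hM t)
  have hgD : ∀ s ∈ Set.Ioo a b, HasDerivAt g (g' s) s := fun s hs =>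
    (hg' s (hsubI hs)).hasDerivAt (Icc_mem_nhds hs.1 hs.2)
  -- bounds on P
  have hPmem : ∀ s ∈ Set.Icc a b, P s ∈ Set.Icc (0:ℝ) 1 := by
    intro s hs
    constructor
    · rw [hP]
      apply intervalIntegral.integral_nonneg hs.1
      intro u hu
      exact (hp_pos u ⟨hu.1, le_trans hu.2 hs.2⟩).le
    · have hadd : (∫ u in a..s, p u) + (∫ u in s..b, p u) = ∫ u in a..b, p u := by
        apply intervalIntegral.integral_add_adjacent_intervals
        · exact (hp_cont.mono (hsubu s hs)).intervalIntegrable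
        · apply (hp_cont.mono ?_).intervalIntegrable
          rw [Set.uIcc_of_le hs.2]
          exact Set.Icc_subset_Icc hs.1 le_rfl
      have hnn : 0 ≤ ∫ u in s..b, p u := by
        apply intervalIntegral.integral_nonneg hs.2
        intro u hu
        exact (hp_pos u ⟨le_trans hs.1 hu.1, hu.2⟩).le
      rw [hP]
      rw [hp_one] at hadd
      linarith
  have hP01 := hPmem sα hmem'
  -- positivity of Q := P * (1 - P) at sα
  have hQpos : 0 < P sα * (1 - P sα) := by
    rcases lt_or_eq_of_le (mul_nonneg hP01.1 (show (0:ℝ) ≤ 1 - P sα by linarith [hP01.2])) with h | h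
    · exact h
    · exfalso
      have h0 : Δα sα = 0 := by
        rw [hΔα, hΔ, ← h, div_zero, mul_zero]
      rw [h0] at hpos; exact lt_irrefl 0 hpos
  have hP0 : 0 < P sα := by nlinarith [hP01.1, hP01.2]
  have hP1 : P sα < 1 := by nlinarith [hP01.1, hP01.2]
  -- sα is interior
  have hsab : sα ∈ Set.Ioo a b := by
    constructor
    · rcases lt_or_eq_of_le ha_le with h | h
      · exact h
      · exfalso; rw [← h] at hP0; rw [hPa] at hP0; exact lt_irrefl 0 hP0
    · rcases lt_or_eq_of_le hb_le with h | h
      · exact h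
      · exfalso; rw [h] at hP1; rw [hPb] at hP1; exact lt_irrefl 1 hP1
  -- Xi sα ≠ 0
  have hΞne : Xi sα ≠ 0 := by
    intro h
    have h0 : Δα sα = 0 := by
      rw [hΔα, hΔ, h]
      norm_num
    rw [h0] at hpos; exact lt_irrefl 0 hpos
  -- neighborhood where Q > 0 and inside Ioo a b
  have hQc : ContinuousAt (fun s => P s * (1 - P s)) sα :=
    ((hPD sα hsab).continuousAt.mul (continuousAt_const.sub (hPD sα hsab).continuousAt))
  have hnb : ({s | 0 < P s * (1 - P s)} ∩ Set.Ioo a b) ∈ nhds sα := by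
    apply Filter.inter_mem
    · exact hQc.eventually (eventually_gt_nhds hQpos)
    · exact isOpen_Ioo.mem_nhds hsab
  obtain ⟨ε, hε, hball⟩ := Metric.mem_nhds_iff.mp hnb
  have hsαJ : sα ∈ Metric.ball sα ε := Metric.mem_ball_self hε
  have hJQ : ∀ s ∈ Metric.ball sα ε, 0 < P s * (1 - P s) := fun s hs => (hball hs).1
  have hJI : ∀ s ∈ Metric.ball sα ε, s ∈ Set.Ioo a b := fun s hs => (hball hs).2
  -- derivative of Xi
  have hXiD : ∀ s ∈ Set.Ioo a b, HasDerivAt Xi ((g s - M b) * p s) s := by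
    intro s hs
    have h3 := (hMD s hs).sub ((hPD s hs).const_mul (M b))
    have h4 : HasDerivAt (fun t => M t - M b * P t) ((g s - M b) * p s) s := by
      exact h3.congr_deriv (by ring)
    exact h4.congr_of_eventuallyEq (Filter.Eventually.of_forall fun t => hXi t)
  -- derivative of Q
  have hQD : ∀ s ∈ Set.Ioo a b, HasDerivAt (fun t => P t * (1 - P t)) (p s * (1 - 2 * P s)) s := by
    intro s hs
    have h1 := (hPD s hs).mul (((hasDerivAt_const s (1:ℝ)).sub (hPD s hs)))
    exact h1.congr_deriv (by simp only [Pi.sub_apply]; ring)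
  -- derivative of the factor F
  have hFD : ∀ s ∈ Set.Ioo a b,
      HasDerivAt (fun t => (α-1)*(1-2*P t)*Xi t + 2*(P t*(1-P t))*(g t - M b))
        (2*(1-α)*p s*Xi s + (1+α)*p s*(1-2*P s)*(g s - M b) + 2*(P s*(1-P s))*(g' s)) s := by
    intro s hs
    have h1 : HasDerivAt (fun t => (α-1)*(1-2*P t)) ((α-1)*(-2*p s)) s := by
      have := ((hasDerivAt_const s (1:ℝ)).sub ((hPD s hs).const_mul 2)).const_mul (α-1)
      exact this.congr_deriv (by ring)
    have hA := h1.mul (hXiD s hs)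
    have hB := ((hQD s hs).const_mul 2).mul ((hgD s hs).sub_const (M b))
    have := hA.add hB
    exact this.congr_deriv (by ring)
  -- derivative of Δα on the ball
  have hDα : ∀ s ∈ Metric.ball sα ε,
      HasDerivAt Δα ((4:ℝ)^α * p s * (P s*(1-P s))^(α-2) *
        (Xi s * ((α-1)*(1-2*P s)*Xi s + 2*(P s*(1-P s))*(g s - M b)))) s := by
    intro s hs
    have hQs : 0 < P s * (1 - P s) := hJQ s hs
    have hs' := hJI s hs
    have hrp : HasDerivAt (fun t => (P t * (1 - P t)) ^ (α-1))
        ((p s * (1 - 2*P s)) * (α-1) * (P s*(1-P s))^(α-1-1)) s :=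
      (hQD s hs').rpow_const (Or.inl (ne_of_gt hQs))
    have hx2 : HasDerivAt (fun t => Xi t ^ 2) (2 * Xi s * ((g s - M b)*p s)) s := by
      have := (hXiD s hs').pow 2
      exact this.congr_deriv (by ring)
    have hmain := (hrp.const_mul ((4:ℝ)^α)).mul hx2
    have heq : HasDerivAt (fun t => (4:ℝ)^α * (P t*(1-P t))^(α-1) * Xi t ^ 2)
        ((4:ℝ)^α * p s * (P s*(1-P s))^(α-2) *
        (Xi s * ((α-1)*(1-2*P s)*Xi s + 2*(P s*(1-P s))*(g s - M b)))) s := by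
      refine hmain.congr_deriv ?_
      have hpow : (P s*(1-P s))^(α-1) = (P s*(1-P s))^(α-2) * (P s*(1-P s)) := by
        rw [show α - 1 = (α-2) + 1 by ring, Real.rpow_add_one (ne_of_gt hQs)]
      have hpow2 : (P s*(1-P s))^(α-1-1) = (P s*(1-P s))^(α-2) := by
        rw [show α - 1 - 1 = α - 2 by ring]
      rw [hpow2, hpow]; ring
    apply heq.congr_of_eventuallyEq
    filter_upwards [Metric.isOpen_ball.mem_nhds hs] with t ht
    have hQt : 0 < P t * (1 - P t) := hJQ t ht
    have h4 : (4 * P t * (1 - P t)) ^ α = (4:ℝ)^α * (P t*(1-P t))^α := by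
      rw [mul_assoc, Real.mul_rpow (by norm_num) hQt.le]
    rw [hΔα, hΔ, h4, show α - 1 = α - 1 from rfl, Real.rpow_sub_one (ne_of_gt hQt)]
    ring
  -- first-order condition
  have hloc : IsLocalMax Δα sα := by
    filter_upwards [Metric.isOpen_ball.mem_nhds hsαJ] with t ht
    exact hmax t (hsubI (hJI t ht))
  have hder0 := hloc.hasDerivAt_eq_zero (hDα sα hsαJ)
  have h4pos : (0:ℝ) < (4:ℝ)^α := Real.rpow_pos_of_pos (by norm_num) _
  have hp0 : 0 < p sα := hp_pos sα hmem'
  have hQrp : (0:ℝ) < (P sα*(1-P sα))^(α-2) := Real.rpow_pos_of_pos hQpos _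
  have hF0 : (α-1)*(1-2*P sα)*Xi sα + 2*(P sα*(1-P sα))*(g sα - M b) = 0 := by
    have hA : (4:ℝ)^α * p sα * (P sα*(1-P sα))^(α-2) ≠ 0 :=
      mul_ne_zero (mul_ne_zero (ne_of_gt h4pos) (ne_of_gt hp0)) (ne_of_gt hQrp)
    rcases mul_eq_zero.mp hder0 with h | h
    · exact absurd h hA
    · rcases mul_eq_zero.mp h with h' | h'
      · exact absurd h' hΞne
      · exact h'
  -- second-order condition
  have hkey : Xi sα * (2*(1-α)*p sα*Xi sα + (1+α)*p sα*(1-2*P sα)*(g sα - M b)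
      + 2*(P sα*(1-P sα))*(g' sα)) ≤ 0 := by
    by_contra hk
    push_neg at hk
    -- the derivative of ψ = Xi * F
    have hψD : ∀ s ∈ Set.Ioo a b,
        HasDerivAt (fun t => Xi t * ((α-1)*(1-2*P t)*Xi t + 2*(P t*(1-P t))*(g t - M b)))
          ((g s - M b)*p s*((α-1)*(1-2*P s)*Xi s + 2*(P s*(1-P s))*(g s - M b))
            + Xi s * (2*(1-α)*p s*Xi s + (1+α)*p s*(1-2*P s)*(g s - M b)
              + 2*(P s*(1-P s))*(g' s))) s := by
      intro s hs
      exact (hXiD s hs).mul (hFD s hs)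
    -- ψd is continuous at interior points
    have hψdc : ∀ s ∈ Set.Ioo a b, ContinuousAt (fun t =>
        (g t - M b)*p t*((α-1)*(1-2*P t)*Xi t + 2*(P t*(1-P t))*(g t - M b))
          + Xi t * (2*(1-α)*p t*Xi t + (1+α)*p t*(1-2*P t)*(g t - M b)
            + 2*(P t*(1-P t))*(g' t))) s := by
      intro s hs
      have hPc := (hPD s hs).continuousAt
      have hXc := (hXiD s hs).continuousAt
      have hpc := hp_cont.continuousAt (Icc_mem_nhds hs.1 hs.2)
      have hgc := hg_cont.continuousAt (Icc_mem_nhds hs.1 hs.2)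
      have hg'c := hg'_cont.continuousAt (Icc_mem_nhds hs.1 hs.2)
      fun_prop
    have hψd0 : 0 < (g sα - M b)*p sα*((α-1)*(1-2*P sα)*Xi sα + 2*(P sα*(1-P sα))*(g sα - M b))
        + Xi sα * (2*(1-α)*p sα*Xi sα + (1+α)*p sα*(1-2*P sα)*(g sα - M b)
          + 2*(P sα*(1-P sα))*(g' sα)) := by
      rw [hF0]; simpa using hk
    have hev : ∀ᶠ s in nhds sα, (0 < (g s - M b)*p s*((α-1)*(1-2*P s)*Xi s + 2*(P s*(1-P s))*(g s - M b))
        + Xi s * (2*(1-α)*p s*Xi s + (1+α)*p s*(1-2*P s)*(g s - M b)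
          + 2*(P s*(1-P s))*(g' s))) ∧ s ∈ Metric.ball sα ε := by
      apply Filter.Eventually.and
      · exact (hψdc sα hsab).eventually (eventually_gt_nhds hψd0)
      · exact Metric.isOpen_ball.mem_nhds hsαJ
    obtain ⟨δ, hδ, hball2⟩ := Metric.eventually_nhds_iff.mp hev
    set t₁ := sα + δ/2 with ht₁
    have hsub2 : Set.Icc sα t₁ ⊆ Metric.ball sα δ := by
      intro y hy
      simp only [Set.mem_Icc, ht₁] at hy
      rw [Metric.mem_ball, Real.dist_eq, abs_lt]
      constructor <;> linarith [hy.1, hy.2, hδ]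
    have hsub3 : ∀ y ∈ Set.Icc sα t₁, y ∈ Metric.ball sα ε := fun y hy => (hball2 (hsub2 hy)).2
    -- ψ is strictly monotone on [sα, t₁]
    have hmono : StrictMonoOn (fun t => Xi t * ((α-1)*(1-2*P t)*Xi t + 2*(P t*(1-P t))*(g t - M b)))
        (Set.Icc sα t₁) := by
      apply strictMonoOn_of_deriv_pos (convex_Icc _ _)
      · apply ContinuousOn.mono (s := Set.Icc sα t₁) ?_ le_rfl.subset
        intro y hy
        exact ((hψD y (hJI y (hsub3 y hy))).continuousAt).continuousWithinAt
      · intro x hx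
        rw [interior_Icc] at hx
        have hx' : x ∈ Set.Icc sα t₁ := Set.Ioo_subset_Icc_self hx
        rw [(hψD x (hJI x (hsub3 x hx'))).deriv]
        exact (hball2 (hsub2 hx')).1
    have hψ0 : Xi sα * ((α-1)*(1-2*P sα)*Xi sα + 2*(P sα*(1-P sα))*(g sα - M b)) = 0 := by
      rw [hF0, mul_zero]
    have hst : sα < t₁ := by rw [ht₁]; linarith
    -- Δα strictly monotone on [sα, t₁]
    have hmono2 : StrictMonoOn Δα (Set.Icc sα t₁) := by
      apply strictMonoOn_of_deriv_pos (convex_Icc _ _)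
      · intro y hy
        exact ((hDα y (hsub3 y hy)).continuousAt).continuousWithinAt
      · intro x hx
        rw [interior_Icc] at hx
        have hx' : x ∈ Set.Icc sα t₁ := Set.Ioo_subset_Icc_self hx
        have hxb := hsub3 x hx'
        rw [(hDα x hxb).deriv]
        have hψx : 0 < Xi x * ((α-1)*(1-2*P x)*Xi x + 2*(P x*(1-P x))*(g x - M b)) := by
          have h5 := hmono (Set.left_mem_Icc.mpr hst.le) hx' hx.1
          simp only [] at h5
          linarith [hψ0, h5]
        have hpx : 0 < p x := hp_pos x (hsubI (hJI x hxb))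
        have hQx : 0 < (P x*(1-P x))^(α-2) := Real.rpow_pos_of_pos (hJQ x hxb) _
        positivity
    have hlt : Δα sα < Δα t₁ :=
      hmono2 (Set.left_mem_Icc.mpr hst.le) (Set.right_mem_Icc.mpr hst.le) hst
    have ht₁I : t₁ ∈ Set.Icc a b := hsubI (hJI t₁ (hsub3 t₁ (Set.right_mem_Icc.mpr hst.le)))
    exact absurd (hmax t₁ ht₁I) (not_le.mpr hlt)
  -- Algebraic endgame
  clear hder0 hDα hFD hQD hXiD hQc hnb hball hJQ hJI hsαJ hloc hPD hMD hgD
  set P₀ := P sα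
  set Q₀ := P₀ * (1 - P₀) with hQ₀
  set p₀ := p sα
  set Ξ₀ := Xi sα
  set G₀ := g sα - M b
  set D₀ := g' sα
  -- from hF0 : (α-1)*(1-2P₀)*Ξ₀ + 2Q₀G₀ = 0
  have e1 : 2*Q₀*G₀ = (1-α)*(1-2*P₀)*Ξ₀ := by linarith [hF0]
  have hΞsq : 0 < Ξ₀^2 := by positivity
  have h2 : 2*Q₀ * (Ξ₀ * (2*(1-α)*p₀*Ξ₀ + (1+α)*p₀*(1-2*P₀)*G₀ + 2*Q₀*D₀)) ≤ 0 :=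
    mul_nonpos_of_nonneg_of_nonpos (by positivity) hkey
  have e2 : 2*Q₀ * (Ξ₀ * (2*(1-α)*p₀*Ξ₀ + (1+α)*p₀*(1-2*P₀)*G₀ + 2*Q₀*D₀))
      = (1-α)*p₀*Ξ₀^2*((1+α) - 4*α*Q₀) + 4*Q₀^2*(D₀*Ξ₀) := by
    have h1P : (1-2*P₀)^2 = 1 - 4*Q₀ := by rw [hQ₀]; ring
    linear_combination ((1+α)*p₀*(1-2*P₀)*Ξ₀) * e1 + ((1-α)*p₀*Ξ₀^2) * h1P
  have h3 : (1-α)*p₀*Ξ₀^2*((1+α) - 4*α*Q₀) + 4*Q₀^2*(D₀*Ξ₀) ≤ 0 := by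
    rw [← e2]; exact h2
  have hQle : 4*Q₀ ≤ 1 := by nlinarith [sq_nonneg (1 - 2*P₀)]
  have hcge : 1 ≤ (1+α) - 4*α*Q₀ := by nlinarith [mul_nonneg hα0 (show (0:ℝ) ≤ 1 - 4*Q₀ by linarith)]
  have hone : (1-α)*p₀*Ξ₀^2 ≤ (1-α)*p₀*Ξ₀^2*((1+α) - 4*α*Q₀) := by
    nlinarith [mul_pos (mul_pos (by linarith : (0:ℝ) < 1-α) hp0) hΞsq]
  have hB : 0 < (1-α)*p₀*Ξ₀^2 := by
    have : (0:ℝ) < 1 - α := by linarith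
    positivity
  have hgx : D₀ * Ξ₀ < 0 := by nlinarith [hQpos]
  have hgne : D₀ ≠ 0 := by
    intro h; rw [h, zero_mul] at hgx; exact lt_irrefl 0 hgx
  refine ⟨hgne, ?_⟩
  -- main bound: (1-α)*p₀*Ξ₀² ≤ 4Q₀²*(-(D₀Ξ₀))
  have hmain : (1-α)*p₀*Ξ₀^2 ≤ 4*Q₀^2*(-(D₀*Ξ₀)) := by nlinarith
  -- square it
  have h16 : (1-α)^2*p₀^2*Ξ₀^2 ≤ 16*Q₀^4*D₀^2 := by
    have hsq := mul_self_le_mul_self hB.le hmain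
    have hΞn : Ξ₀^2 ≠ 0 := ne_of_gt hΞsq
    have expand : ((1-α)*p₀*Ξ₀^2) * ((1-α)*p₀*Ξ₀^2) = ((1-α)^2*p₀^2*Ξ₀^2) * Ξ₀^2 := by ring
    have expand2 : (4*Q₀^2*(-(D₀*Ξ₀))) * (4*Q₀^2*(-(D₀*Ξ₀))) = (16*Q₀^4*D₀^2) * Ξ₀^2 := by ring
    rw [expand, expand2] at hsq
    exact le_of_mul_le_mul_right hsq hΞsq
  -- rpow manipulations; h := 4*P₀*(1-P₀)
  have hh : 0 < 4 * P₀ * (1 - P₀) := by nlinarith [hQpos]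
  have hh1 : 4 * P₀ * (1 - P₀) ≤ 1 := by nlinarith [sq_nonneg (1-2*P₀)]
  set h := 4 * P₀ * (1 - P₀) with hhdef
  have hΔαval : Δα sα = h ^ α * (Ξ₀^2 / Q₀) := by rw [hΔα, hΔ]
  have hDsq : 0 < D₀^2 := by positivity
  -- X := the quantity inside the root
  set X := (4:ℝ) ^ (1-α) * (1-α)^2 * p₀^2 * Δα sα / D₀^2 with hXdef
  have hX0 : 0 ≤ X := by
    have h1 : 0 ≤ (4:ℝ)^(1-α) := (Real.rpow_pos_of_pos (by norm_num) _).le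
    have : 0 ≤ (4:ℝ)^(1-α) * (1-α)^2 * p₀^2 * Δα sα :=
      mul_nonneg (mul_nonneg (mul_nonneg h1 (sq_nonneg _)) (sq_nonneg _)) hpos.le
    positivity
  have hXh : X ≤ h ^ ((3:ℝ)+α) := by
    rw [hXdef, div_le_iff₀ hDsq]
    have hha : (0:ℝ) < h ^ (α-1) := Real.rpow_pos_of_pos hh _
    have e4 : Δα sα = 4 * Ξ₀^2 * h^(α-1) := by
      rw [hΔαval, Real.rpow_sub_one (ne_of_gt hh)]
      rw [hQ₀, hhdef]
      have h1P : (1 - P₀) ≠ 0 := (sub_pos.mpr hP1).ne'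
      field_simp
    have e5 : h ^ ((3:ℝ)+α) = h^4 * h^(α-1) := by
      rw [show (3:ℝ)+α = ((4:ℕ):ℝ) + (α-1) by push_cast; ring, Real.rpow_add hh,
        Real.rpow_natCast]
    rw [e4, e5]
    have h44 : (4:ℝ)^(1-α) ≤ 4 := by
      calc (4:ℝ)^(1-α) ≤ (4:ℝ)^(1:ℝ) :=
            Real.rpow_le_rpow_of_exponent_le (by norm_num) (by linarith)
        _ = 4 := Real.rpow_one 4
    have hh4 : h^4 = 256 * Q₀^4 := by rw [hhdef, hQ₀]; ring
    have hstep : (4:ℝ)^(1-α) * (1-α)^2 * p₀^2 * (4 * Ξ₀^2) ≤ h^4 * D₀^2 := by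
      rw [hh4]
      calc (4:ℝ)^(1-α) * (1-α)^2 * p₀^2 * (4 * Ξ₀^2)
          ≤ 4 * (1-α)^2 * p₀^2 * (4 * Ξ₀^2) := by
            have : 0 ≤ (1-α)^2 * p₀^2 * (4 * Ξ₀^2) := by positivity
            nlinarith [h44, this]
        _ = 16 * ((1-α)^2 * p₀^2 * Ξ₀^2) := by ring
        _ ≤ 16 * (16*Q₀^4*D₀^2) := by linarith [h16]
        _ = 256 * Q₀^4 * D₀^2 := by ring
    calc (4:ℝ)^(1-α) * (1-α)^2 * p₀^2 * (4 * Ξ₀^2 * h^(α-1))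
        = ((4:ℝ)^(1-α) * (1-α)^2 * p₀^2 * (4 * Ξ₀^2)) * h^(α-1) := by ring
      _ ≤ (h^4 * D₀^2) * h^(α-1) := by
          exact mul_le_mul_of_nonneg_right hstep hha.le
      _ = h^4 * h^(α-1) * D₀^2 := by ring
  have h3α : (0:ℝ) < 3 + α := by linarith
  have hrh : r ≤ h := by
    rw [hr]
    calc X ^ (1/(3+α)) ≤ (h ^ ((3:ℝ)+α)) ^ (1/(3+α)) :=
          Real.rpow_le_rpow hX0 hXh (by positivity)
      _ = h := by
          rw [← Real.rpow_mul hh.le, mul_one_div, div_self (ne_of_gt h3α), Real.rpow_one]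
  refine ⟨hrh, ?_, ?_⟩
  · -- P₀ in the interval
    have h1r : (1-2*P₀)^2 ≤ 1 - r := by nlinarith [hrh, hQpos]
    have hsq2 : |1-2*P₀| ≤ Real.sqrt (1-r) := by
      rw [← Real.sqrt_sq_eq_abs]
      exact Real.sqrt_le_sqrt h1r
    have habs1 : 1-2*P₀ ≤ Real.sqrt (1-r) := le_trans (le_abs_self _) hsq2
    have habs2 : -(Real.sqrt (1-r)) ≤ 1-2*P₀ := by
      have := neg_abs_le (1-2*P₀)
      linarith [hsq2]
    constructor <;> [linarith; linarith]
  · have h1r : (1-2*P₀)^2 ≤ 1 - r := by nlinarith [hrh, hQpos]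
    have hsq2 : |1-2*P₀| ≤ Real.sqrt (1-r) := by
      rw [← Real.sqrt_sq_eq_abs]
      exact Real.sqrt_le_sqrt h1r
    have habs1 : 1-2*P₀ ≤ Real.sqrt (1-r) := le_trans (le_abs_self _) hsq2
    have habs2 : -(Real.sqrt (1-r)) ≤ 1-2*P₀ := by
      have := neg_abs_le (1-2*P₀)
      linarith [hsq2]
    constructor <;> [linarith; linarith]
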